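/- Define τ1, τ2 : [0,1] → [0,1] by: τ1(x) = 2x on [0, 1/10], τ1(x) = 8x − 3/5 on (1/10, 1/5), τ2(x) = 8x on [0, 1/10], τ2(x) = 2x + 3/5 on (1/10, 1/5), and, for both k = 1,2, τ_k(x) = 5x − 1 on [1/5, 2/5), 5x − 2 on [2/5, 3/5), 5x − 3 on [3/5, 4/5), 5x − 4 on [4/5, 1] (i.e. τ_k(x) = 5x mod 1 on [1/5,1]). Let f = (30/31)·1_{[0,3/5)} + (65/62)·1_{[3/5,1]} (a probability density). Then there is NO Borel measurable function p : [0,1] → [0,1] such that the density f is invariant under the position-dependent random map R = {τ1, τ2; p, 1−p}. -/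

import Mathlib

open MeasureTheory Set Filter
open scoped ENNReal

/-- Lebesgue measure restricted to the unit interval `[0,1]`. -/
noncomputable def leb01 : Measure ℝ := volume.restrict (Set.Icc (0:ℝ) 1)

/-- The measure `f · λ_Leb` with density `f` with respect to Lebesgue measure on `[0,1]`. -/
noncomputable def densMeasure (f : ℝ → ℝ) : Measure ℝ :=
  leb01.withDensity (fun x => ENNReal.ofReal (f x))

/-- Invariance of a measure `μ` under the position dependent random map
`R = {τ1, τ2; p, 1-p}`. -/
def RMInvariant (τ1 τ2 p : ℝ → ℝ) (μ : Measure ℝ) : Prop :=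
  ∀ A : Set ℝ, MeasurableSet A →
    μ A = ∫⁻ x, (ENNReal.ofReal (p x) * A.indicator (fun _ => (1:ℝ≥0∞)) (τ1 x)
      + ENNReal.ofReal (1 - p x) * A.indicator (fun _ => (1:ℝ≥0∞)) (τ2 x)) ∂μ

/-- The map `x ↦ 5x mod 1` on `[1/5, 1]`, written with explicit branches. -/
noncomputable def fiveXmod1 : ℝ → ℝ := fun x =>
  if x < 2/5 then 5*x - 1 else if x < 3/5 then 5*x - 2
  else if x < 4/5 then 5*x - 3 else 5*x - 4

/-- Lower boundary map of Examples 2 and 3 of the paper. -/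
noncomputable def tauLower : ℝ → ℝ := fun x =>
  if x ≤ 1/10 then 2*x else if x < 1/5 then 8*x - 3/5 else fiveXmod1 x

/-- Upper boundary map of Examples 2 and 3 of the paper. -/
noncomputable def tauUpper : ℝ → ℝ := fun x =>
  if x ≤ 1/10 then 8*x else if x < 1/5 then 2*x + 3/5 else fiveXmod1 x

/-- The invariant density of the selector of Example 3 of the paper. -/
noncomputable def fEx3 : ℝ → ℝ := fun x => if x < 3/5 then 30/31 else 65/62

lemma mu_Ico_lo (a b : ℝ) (h0 : 0 ≤ a) (hb : b ≤ 3/5) :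
    densMeasure fEx3 (Ico a b) = ENNReal.ofReal ((30/31) * (b - a)) := by
  rw [densMeasure, leb01, withDensity_apply _ measurableSet_Ico,
    Measure.restrict_restrict measurableSet_Ico]
  have hsub : Ico a b ∩ Icc (0:ℝ) 1 = Ico a b := by
    apply inter_eq_left.mpr
    intro y hy
    exact ⟨le_trans h0 hy.1, by have h1 := hy.2; linarith⟩
  rw [hsub, setLIntegral_congr_fun measurableSet_Ico
    ((fun y (hy : y ∈ Ico a b) =>
      show ENNReal.ofReal (fEx3 y) = ENNReal.ofReal (30/31) by
        rw [fEx3]; simp only [if_pos (show y < 3/5 by linarith [hy.2])])),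
    setLIntegral_const, Real.volume_Ico, ← ENNReal.ofReal_mul (by norm_num)]

lemma mu_Ico_hi (a b : ℝ) (h0 : 3/5 ≤ a) (hb : b ≤ 1) :
    densMeasure fEx3 (Ico a b) = ENNReal.ofReal ((65/62) * (b - a)) := by
  rw [densMeasure, leb01, withDensity_apply _ measurableSet_Ico,
    Measure.restrict_restrict measurableSet_Ico]
  have hsub : Ico a b ∩ Icc (0:ℝ) 1 = Ico a b := by
    apply inter_eq_left.mpr
    intro y hy
    exact ⟨by linarith [hy.1], by have h1 := hy.2; linarith⟩
  rw [hsub, setLIntegral_congr_fun measurableSet_Ico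
    ((fun y (hy : y ∈ Ico a b) =>
      show ENNReal.ofReal (fEx3 y) = ENNReal.ofReal (65/62) by
        rw [fEx3]; simp only [if_neg (not_lt.mpr (show 3/5 ≤ y by linarith [hy.1]))])),
    setLIntegral_const, Real.volume_Ico, ← ENNReal.ofReal_mul (by norm_num)]

lemma mu_Ioo_lo (a b : ℝ) (h0 : 0 ≤ a) (hb : b ≤ 3/5) :
    densMeasure fEx3 (Ioo a b) = ENNReal.ofReal ((30/31) * (b - a)) := by
  rw [densMeasure, leb01, withDensity_apply _ measurableSet_Ioo,
    Measure.restrict_restrict measurableSet_Ioo]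
  have hsub : Ioo a b ∩ Icc (0:ℝ) 1 = Ioo a b := by
    apply inter_eq_left.mpr
    intro y hy
    exact ⟨by linarith [hy.1], by have h1 := hy.2; linarith⟩
  rw [hsub, setLIntegral_congr_fun measurableSet_Ioo
    ((fun y (hy : y ∈ Ioo a b) =>
      show ENNReal.ofReal (fEx3 y) = ENNReal.ofReal (30/31) by
        rw [fEx3]; simp only [if_pos (show y < 3/5 by linarith [hy.2])])),
    setLIntegral_const, Real.volume_Ioo, ← ENNReal.ofReal_mul (by norm_num)]

lemma mu_Ioo_hi (a b : ℝ) (h0 : 3/5 ≤ a) (hb : b ≤ 1) :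
    densMeasure fEx3 (Ioo a b) = ENNReal.ofReal ((65/62) * (b - a)) := by
  rw [densMeasure, leb01, withDensity_apply _ measurableSet_Ioo,
    Measure.restrict_restrict measurableSet_Ioo]
  have hsub : Ioo a b ∩ Icc (0:ℝ) 1 = Ioo a b := by
    apply inter_eq_left.mpr
    intro y hy
    exact ⟨by linarith [hy.1], by have h1 := hy.2; linarith⟩
  rw [hsub, setLIntegral_congr_fun measurableSet_Ioo
    ((fun y (hy : y ∈ Ioo a b) =>
      show ENNReal.ofReal (fEx3 y) = ENNReal.ofReal (65/62) by
        rw [fEx3]; simp only [if_neg (not_lt.mpr (show 3/5 ≤ y by linarith [hy.1]))])),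
    setLIntegral_const, Real.volume_Ioo, ← ENNReal.ofReal_mul (by norm_num)]

lemma mem_C1 {x : ℝ} (h5 : 1/5 ≤ x) (hm : fiveXmod1 x ∈ Ico (3/5:ℝ) (4/5)) :
    x ∈ Ico (8/25:ℝ) (9/25) ∨ x ∈ Ico (13/25:ℝ) (14/25) ∨
    x ∈ Ico (18/25:ℝ) (19/25) ∨ x ∈ Ico (23/25:ℝ) (24/25) := by
  rw [fiveXmod1] at hm
  split_ifs at hm with h1 h2 h3 <;> obtain ⟨hm1, hm2⟩ := hm
  · exact Or.inl ⟨by linarith, by linarith⟩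
  · exact Or.inr (Or.inl ⟨by linarith, by linarith⟩)
  · exact Or.inr (Or.inr (Or.inl ⟨by linarith, by linarith⟩))
  · exact Or.inr (Or.inr (Or.inr ⟨by linarith, by linarith⟩))

lemma mem_C2 {x : ℝ} (h5 : 1/5 ≤ x) (hm : fiveXmod1 x ∈ Ioo (9/10:ℝ) (19/20)) :
    x ∈ Ioo (19/50:ℝ) (39/100) ∨ x ∈ Ioo (29/50:ℝ) (59/100) ∨
    x ∈ Ioo (39/50:ℝ) (79/100) ∨ x ∈ Ioo (49/50:ℝ) (99/100) := by
  rw [fiveXmod1] at hm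
  split_ifs at hm with h1 h2 h3 <;> obtain ⟨hm1, hm2⟩ := hm
  · exact Or.inl ⟨by linarith, by linarith⟩
  · exact Or.inr (Or.inl ⟨by linarith, by linarith⟩)
  · exact Or.inr (Or.inr (Or.inl ⟨by linarith, by linarith⟩))
  · exact Or.inr (Or.inr (Or.inr ⟨by linarith, by linarith⟩))


lemma bound1 (p : ℝ → ℝ) (x : ℝ) (hx : x ∈ Icc (0:ℝ) 1) (hp : p x ∈ Icc (0:ℝ) 1) :
    ENNReal.ofReal (p x) * (Ico (3/5:ℝ) (4/5)).indicator (fun _ => (1:ℝ≥0∞)) (tauLower x)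
      + ENNReal.ofReal (1 - p x) * (Ico (3/5:ℝ) (4/5)).indicator (fun _ => (1:ℝ≥0∞)) (tauUpper x)
    ≤ (Ico (3/40:ℝ) (1/10)).indicator (fun _ => (1:ℝ≥0∞)) x
      + (Ico (8/25:ℝ) (9/25)).indicator (fun _ => (1:ℝ≥0∞)) x
      + (Ico (13/25:ℝ) (14/25)).indicator (fun _ => (1:ℝ≥0∞)) x
      + (Ico (18/25:ℝ) (19/25)).indicator (fun _ => (1:ℝ≥0∞)) x
      + (Ico (23/25:ℝ) (24/25)).indicator (fun _ => (1:ℝ≥0∞)) x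
      + (Ico (3/20:ℝ) (7/40)).indicator (fun y => ENNReal.ofReal (p y)) x := by
  obtain ⟨hx0, hx1⟩ := hx
  obtain ⟨hp0, hp1⟩ := hp
  have hq1 : ENNReal.ofReal (p x) ≤ 1 := ENNReal.ofReal_le_one.mpr hp1
  have hr1 : ENNReal.ofReal (1 - p x) ≤ 1 := ENNReal.ofReal_le_one.mpr (by linarith)
  by_cases h5 : x < 1/5
  · by_cases h10 : x ≤ 1/10
    · simp only [tauLower, tauUpper, if_pos h10]
      have hL : (2*x) ∉ Ico (3/5:ℝ) (4/5) := by rintro ⟨hm1, -⟩; linarith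
      by_cases hm : (8*x) ∈ Ico (3/5:ℝ) (4/5)
      · have hxI : x ∈ Ico (3/40:ℝ) (1/10) := ⟨by linarith [hm.1], by linarith [hm.2]⟩
        simp only [Set.indicator_of_notMem hL, Set.indicator_of_mem hm,
          Set.indicator_of_mem hxI, mul_zero, mul_one, zero_add]
        exact le_trans hr1 (le_trans le_self_add
          (le_trans le_self_add (le_trans le_self_add
            (le_trans le_self_add le_self_add))))
      · simp only [Set.indicator_of_notMem hL, Set.indicator_of_notMem hm,
          mul_zero, zero_add]
        exact zero_le
    · push_neg at h10
      simp only [tauLower, tauUpper, if_neg (not_le.mpr h10), if_pos h5]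
      by_cases hmL : (8*x - 3/5) ∈ Ico (3/5:ℝ) (4/5)
      · have hU : (2*x + 3/5) ∉ Ico (3/5:ℝ) (4/5) := by
          rintro ⟨-, hm2⟩; linarith [hmL.1]
        have hxS : x ∈ Ico (3/20:ℝ) (7/40) := ⟨by linarith [hmL.1], by linarith [hmL.2]⟩
        simp only [Set.indicator_of_mem hmL, Set.indicator_of_notMem hU,
          Set.indicator_of_mem hxS, mul_one, mul_zero, add_zero]
        exact le_add_left le_rfl
      · have hU : (2*x + 3/5) ∉ Ico (3/5:ℝ) (4/5) := by
          rintro ⟨-, hm2⟩; linarith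
        simp only [Set.indicator_of_notMem hmL, Set.indicator_of_notMem hU,
          mul_zero, zero_add]
        exact zero_le
  · push_neg at h5
    have hfL : tauLower x = fiveXmod1 x := by
      rw [tauLower, if_neg (show ¬ x ≤ 1/10 by push_neg; linarith),
        if_neg (not_lt.mpr h5)]
    have hfU : tauUpper x = fiveXmod1 x := by
      rw [tauUpper, if_neg (show ¬ x ≤ 1/10 by push_neg; linarith),
        if_neg (not_lt.mpr h5)]
    rw [hfL, hfU]
    by_cases hm : fiveXmod1 x ∈ Ico (3/5:ℝ) (4/5)
    · have hsum : ENNReal.ofReal (p x) * 1 + ENNReal.ofReal (1 - p x) * 1 = 1 := by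
        rw [mul_one, mul_one, ← ENNReal.ofReal_add hp0 (by linarith)]
        norm_num
      simp only [Set.indicator_of_mem hm]
      rw [hsum]
      rcases mem_C1 h5 hm with h | h | h | h
      · rw [Set.indicator_of_mem h]
        exact le_trans (le_add_left le_rfl) (le_trans le_self_add
          (le_trans le_self_add (le_trans le_self_add le_self_add)))
      · rw [Set.indicator_of_mem h]
        exact le_trans (le_add_left le_rfl) (le_trans le_self_add
          (le_trans le_self_add le_self_add))
      · rw [Set.indicator_of_mem h]
        exact le_trans (le_add_left le_rfl) (le_trans le_self_add le_self_add)
      · rw [Set.indicator_of_mem h]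
        exact le_trans (le_add_left le_rfl) le_self_add
    · simp only [Set.indicator_of_notMem hm, mul_zero, add_zero]
      exact zero_le

lemma bound2 (p : ℝ → ℝ) (x : ℝ) (hx : x ∈ Icc (0:ℝ) 1) (hp : p x ∈ Icc (0:ℝ) 1) :
    ENNReal.ofReal (p x) * (Ioo (9/10:ℝ) (19/20)).indicator (fun _ => (1:ℝ≥0∞)) (tauLower x)
      + ENNReal.ofReal (1 - p x) * (Ioo (9/10:ℝ) (19/20)).indicator (fun _ => (1:ℝ≥0∞)) (tauUpper x)
    ≤ (Ioo (19/50:ℝ) (39/100)).indicator (fun _ => (1:ℝ≥0∞)) x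
      + (Ioo (29/50:ℝ) (59/100)).indicator (fun _ => (1:ℝ≥0∞)) x
      + (Ioo (39/50:ℝ) (79/100)).indicator (fun _ => (1:ℝ≥0∞)) x
      + (Ioo (49/50:ℝ) (99/100)).indicator (fun _ => (1:ℝ≥0∞)) x
      + (Ico (3/16:ℝ) (31/160)).indicator (fun y => ENNReal.ofReal (p y)) x
      + (Ico (3/20:ℝ) (7/40)).indicator (fun y => ENNReal.ofReal (1 - p y)) x := by
  obtain ⟨hx0, hx1⟩ := hx
  obtain ⟨hp0, hp1⟩ := hp
  by_cases h5 : x < 1/5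
  · by_cases h10 : x ≤ 1/10
    · simp only [tauLower, tauUpper, if_pos h10]
      have hL : (2*x) ∉ Ioo (9/10:ℝ) (19/20) := by rintro ⟨hm1, -⟩; linarith
      have hU : (8*x) ∉ Ioo (9/10:ℝ) (19/20) := by rintro ⟨hm1, -⟩; linarith
      simp only [Set.indicator_of_notMem hL, Set.indicator_of_notMem hU,
        mul_zero, zero_add]
      exact zero_le
    · push_neg at h10
      simp only [tauLower, tauUpper, if_neg (not_le.mpr h10), if_pos h5]
      by_cases hmL : (8*x - 3/5) ∈ Ioo (9/10:ℝ) (19/20)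
      · have hU : (2*x + 3/5) ∉ Ioo (9/10:ℝ) (19/20) := by
          rintro ⟨-, hm2⟩; linarith [hmL.1]
        have hxT : x ∈ Ico (3/16:ℝ) (31/160) :=
          ⟨by linarith [hmL.1], by linarith [hmL.2]⟩
        simp only [Set.indicator_of_mem hmL, Set.indicator_of_notMem hU,
          Set.indicator_of_mem hxT, mul_one, mul_zero, add_zero]
        exact le_trans (le_add_left le_rfl) le_self_add
      · by_cases hmU : (2*x + 3/5) ∈ Ioo (9/10:ℝ) (19/20)
        · have hxS : x ∈ Ico (3/20:ℝ) (7/40) :=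
            ⟨by linarith [hmU.1], by linarith [hmU.2]⟩
          simp only [Set.indicator_of_notMem hmL, Set.indicator_of_mem hmU,
            Set.indicator_of_mem hxS, mul_one, mul_zero, zero_add]
          exact le_add_left le_rfl
        · simp only [Set.indicator_of_notMem hmL, Set.indicator_of_notMem hmU,
            mul_zero, zero_add]
          exact zero_le
  · push_neg at h5
    have hfL : tauLower x = fiveXmod1 x := by
      rw [tauLower, if_neg (show ¬ x ≤ 1/10 by push_neg; linarith),
        if_neg (not_lt.mpr h5)]
    have hfU : tauUpper x = fiveXmod1 x := by
      rw [tauUpper, if_neg (show ¬ x ≤ 1/10 by push_neg; linarith),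
        if_neg (not_lt.mpr h5)]
    rw [hfL, hfU]
    by_cases hm : fiveXmod1 x ∈ Ioo (9/10:ℝ) (19/20)
    · have hsum : ENNReal.ofReal (p x) * 1 + ENNReal.ofReal (1 - p x) * 1 = 1 := by
        rw [mul_one, mul_one, ← ENNReal.ofReal_add hp0 (by linarith)]
        norm_num
      simp only [Set.indicator_of_mem hm]
      rw [hsum]
      rcases mem_C2 h5 hm with h | h | h | h
      · rw [Set.indicator_of_mem h]
        exact le_trans (le_trans le_self_add (le_trans le_self_add
          (le_trans le_self_add (le_trans le_self_add le_self_add)))) le_rfl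
      · rw [Set.indicator_of_mem h]
        exact le_trans (le_add_left le_rfl) (le_trans le_self_add
          (le_trans le_self_add (le_trans le_self_add le_self_add)))
      · rw [Set.indicator_of_mem h]
        exact le_trans (le_add_left le_rfl) (le_trans le_self_add
          (le_trans le_self_add le_self_add))
      · rw [Set.indicator_of_mem h]
        exact le_trans (le_add_left le_rfl) (le_trans le_self_add le_self_add)
    · simp only [Set.indicator_of_notMem hm, mul_zero, add_zero]
      exact zero_le

/-- (Example 3 of the paper.)  The invariant density
`f = (30/31)·1_{[0,3/5)} + (65/62)·1_{[3/5,1]}` of the selector of Example 3 cannot be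
achieved by any position dependent random map `{τ1, τ2; p, 1−p}` on the boundary maps. -/
theorem no_probability_achieves_selector_density :
    ¬ ∃ p : ℝ → ℝ, Measurable p ∧ (∀ x ∈ Set.Icc (0:ℝ) 1, p x ∈ Set.Icc (0:ℝ) 1) ∧
      RMInvariant tauLower tauUpper p (densMeasure fEx3) := by
  rintro ⟨p, hp, hp01, hinv⟩
  set μ := densMeasure fEx3 with hμdef
  have hq : Measurable fun x => ENNReal.ofReal (p x) := hp.ennreal_ofReal
  have hr : Measurable fun x => ENNReal.ofReal (1 - p x) :=
    (measurable_const.sub hp).ennreal_ofReal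
  have hae : ∀ᵐ x ∂μ, x ∈ Icc (0:ℝ) 1 := by
    have h1 : ∀ᵐ x ∂leb01, x ∈ Icc (0:ℝ) 1 := by
      rw [leb01]; exact ae_restrict_mem measurableSet_Icc
    exact h1.filter_mono (withDensity_absolutelyContinuous leb01 _).ae_le
  set Xq := ∫⁻ x in Ico (3/20:ℝ) (7/40), ENNReal.ofReal (p x) ∂μ with hXqdef
  set Xr := ∫⁻ x in Ico (3/20:ℝ) (7/40), ENNReal.ofReal (1 - p x) ∂μ with hXrdef
  set Xt := ∫⁻ x in Ico (3/16:ℝ) (31/160), ENNReal.ofReal (p x) ∂μ with hXtdef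
  -- inequality from test set A1 = [3/5, 4/5)
  have hle1 : μ (Ico (3/5:ℝ) (4/5)) ≤ ENNReal.ofReal (23/124) + Xq := by
    rw [hinv (Ico (3/5) (4/5)) measurableSet_Ico]
    have step1 : (∫⁻ x, (ENNReal.ofReal (p x)
          * (Ico (3/5:ℝ) (4/5)).indicator (fun _ => (1:ℝ≥0∞)) (tauLower x)
        + ENNReal.ofReal (1 - p x)
          * (Ico (3/5:ℝ) (4/5)).indicator (fun _ => (1:ℝ≥0∞)) (tauUpper x)) ∂μ)
        ≤ ∫⁻ x, ((Ico (3/40:ℝ) (1/10)).indicator (fun _ => (1:ℝ≥0∞)) x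
          + (Ico (8/25:ℝ) (9/25)).indicator (fun _ => (1:ℝ≥0∞)) x
          + (Ico (13/25:ℝ) (14/25)).indicator (fun _ => (1:ℝ≥0∞)) x
          + (Ico (18/25:ℝ) (19/25)).indicator (fun _ => (1:ℝ≥0∞)) x
          + (Ico (23/25:ℝ) (24/25)).indicator (fun _ => (1:ℝ≥0∞)) x
          + (Ico (3/20:ℝ) (7/40)).indicator (fun y => ENNReal.ofReal (p y)) x) ∂μ :=
      lintegral_mono_ae (hae.mono fun x hx => bound1 p x hx (hp01 x hx))
    refine le_trans step1 (le_of_eq ?_)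
    rw [lintegral_add_right _ (hq.indicator measurableSet_Ico),
      lintegral_add_right _ (measurable_const.indicator measurableSet_Ico),
      lintegral_add_right _ (measurable_const.indicator measurableSet_Ico),
      lintegral_add_right _ (measurable_const.indicator measurableSet_Ico),
      lintegral_add_right _ (measurable_const.indicator measurableSet_Ico),
      lintegral_indicator measurableSet_Ico, lintegral_indicator measurableSet_Ico,
      lintegral_indicator measurableSet_Ico, lintegral_indicator measurableSet_Ico,
      lintegral_indicator measurableSet_Ico, lintegral_indicator measurableSet_Ico,
      setLIntegral_one, setLIntegral_one, setLIntegral_one, setLIntegral_one,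
      setLIntegral_one]
    rw [mu_Ico_lo _ _ (by norm_num) (by norm_num),
      mu_Ico_lo _ _ (by norm_num) (by norm_num),
      mu_Ico_lo _ _ (by norm_num) (by norm_num),
      mu_Ico_hi _ _ (by norm_num) (by norm_num),
      mu_Ico_hi _ _ (by norm_num) (by norm_num)]
    congr 1
    rw [← ENNReal.ofReal_add (by norm_num) (by norm_num),
      ← ENNReal.ofReal_add (by norm_num) (by norm_num),
      ← ENNReal.ofReal_add (by norm_num) (by norm_num),
      ← ENNReal.ofReal_add (by norm_num) (by norm_num)]
    norm_num
  have hA1 : μ (Ico (3/5:ℝ) (4/5)) = ENNReal.ofReal (13/62) := by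
    rw [hμdef, mu_Ico_hi _ _ (by norm_num) (by norm_num)]
    norm_num
  -- Xq ≤ μ(S') = 3/124
  have haeS : ∀ᵐ x ∂(μ.restrict (Ico (3/20:ℝ) (7/40))), x ∈ Icc (0:ℝ) 1 :=
    hae.filter_mono (ae_mono Measure.restrict_le_self)
  have haeT : ∀ᵐ x ∂(μ.restrict (Ico (3/16:ℝ) (31/160))), x ∈ Icc (0:ℝ) 1 :=
    hae.filter_mono (ae_mono Measure.restrict_le_self)
  have hmuS : μ (Ico (3/20:ℝ) (7/40)) = ENNReal.ofReal (3/124) := by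
    rw [hμdef, mu_Ico_lo _ _ (by norm_num) (by norm_num)]; norm_num
  have hmuT : μ (Ico (3/16:ℝ) (31/160)) = ENNReal.ofReal (3/496) := by
    rw [hμdef, mu_Ico_lo _ _ (by norm_num) (by norm_num)]; norm_num
  have hXq_le : Xq ≤ ENNReal.ofReal (3/124) := by
    calc Xq ≤ ∫⁻ _ in Ico (3/20:ℝ) (7/40), 1 ∂μ :=
          lintegral_mono_ae (haeS.mono fun x hx =>
            ENNReal.ofReal_le_one.mpr (hp01 x hx).2)
      _ = μ (Ico (3/20:ℝ) (7/40)) := setLIntegral_one _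
      _ = ENNReal.ofReal (3/124) := hmuS
  have hXt_le : Xt ≤ ENNReal.ofReal (3/496) := by
    calc Xt ≤ ∫⁻ _ in Ico (3/16:ℝ) (31/160), 1 ∂μ :=
          lintegral_mono_ae (haeT.mono fun x hx =>
            ENNReal.ofReal_le_one.mpr (hp01 x hx).2)
      _ = μ (Ico (3/16:ℝ) (31/160)) := setLIntegral_one _
      _ = ENNReal.ofReal (3/496) := hmuT
  -- Xq = 3/124 exactly
  have hXq_ge : ENNReal.ofReal (3/124) ≤ Xq := by
    have h3 : ENNReal.ofReal (23/124) + ENNReal.ofReal (3/124)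
        ≤ ENNReal.ofReal (23/124) + Xq := by
      calc ENNReal.ofReal (23/124) + ENNReal.ofReal (3/124)
          = ENNReal.ofReal (13/62) := by
            rw [← ENNReal.ofReal_add (by norm_num) (by norm_num)]; norm_num
        _ ≤ _ := hA1 ▸ hle1
    exact (ENNReal.add_le_add_iff_left ENNReal.ofReal_ne_top).mp h3
  have hXq_eq : Xq = ENNReal.ofReal (3/124) := le_antisymm hXq_le hXq_ge
  -- Xq + Xr = μ(S'), hence Xr = 0
  have hsplit : Xq + Xr = μ (Ico (3/20:ℝ) (7/40)) := by
    have hcong : ∫⁻ x in Ico (3/20:ℝ) (7/40),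
        (ENNReal.ofReal (p x) + ENNReal.ofReal (1 - p x)) ∂μ
        = ∫⁻ _ in Ico (3/20:ℝ) (7/40), (1:ℝ≥0∞) ∂μ :=
      setLIntegral_congr_fun measurableSet_Ico (
        (fun x (hx : x ∈ Ico (3/20:ℝ) (7/40)) => by
          have h01 : p x ∈ Icc (0:ℝ) 1 :=
            hp01 x ⟨by linarith [hx.1], by linarith [hx.2]⟩
          rw [← ENNReal.ofReal_add h01.1 (by linarith [h01.2]),
            show p x + (1 - p x) = 1 by ring, ENNReal.ofReal_one]))
    rw [hXqdef, hXrdef, ← lintegral_add_left hq, hcong, setLIntegral_one]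
  have hXr : Xr = 0 := by
    have h4 : Xq + Xr = Xq + 0 := by rw [add_zero, hsplit, hmuS, hXq_eq]
    exact (ENNReal.add_right_inj
      (by rw [hXq_eq]; exact ENNReal.ofReal_ne_top)).mp h4
  -- inequality from test set A2 = (9/10, 19/20)
  have hle2 : μ (Ioo (9/10:ℝ) (19/20)) ≤ ENNReal.ofReal (5/124) + Xt + Xr := by
    rw [hinv (Ioo (9/10) (19/20)) measurableSet_Ioo]
    have step2 : (∫⁻ x, (ENNReal.ofReal (p x)
          * (Ioo (9/10:ℝ) (19/20)).indicator (fun _ => (1:ℝ≥0∞)) (tauLower x)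
        + ENNReal.ofReal (1 - p x)
          * (Ioo (9/10:ℝ) (19/20)).indicator (fun _ => (1:ℝ≥0∞)) (tauUpper x)) ∂μ)
        ≤ ∫⁻ x, ((Ioo (19/50:ℝ) (39/100)).indicator (fun _ => (1:ℝ≥0∞)) x
          + (Ioo (29/50:ℝ) (59/100)).indicator (fun _ => (1:ℝ≥0∞)) x
          + (Ioo (39/50:ℝ) (79/100)).indicator (fun _ => (1:ℝ≥0∞)) x
          + (Ioo (49/50:ℝ) (99/100)).indicator (fun _ => (1:ℝ≥0∞)) x
          + (Ico (3/16:ℝ) (31/160)).indicator (fun y => ENNReal.ofReal (p y)) x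
          + (Ico (3/20:ℝ) (7/40)).indicator (fun y => ENNReal.ofReal (1 - p y)) x) ∂μ :=
      lintegral_mono_ae (hae.mono fun x hx => bound2 p x hx (hp01 x hx))
    refine le_trans step2 (le_of_eq ?_)
    rw [lintegral_add_right _ (hr.indicator measurableSet_Ico),
      lintegral_add_right _ (hq.indicator measurableSet_Ico),
      lintegral_add_right _ (measurable_const.indicator measurableSet_Ioo),
      lintegral_add_right _ (measurable_const.indicator measurableSet_Ioo),
      lintegral_add_right _ (measurable_const.indicator measurableSet_Ioo),
      lintegral_indicator measurableSet_Ioo, lintegral_indicator measurableSet_Ioo,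
      lintegral_indicator measurableSet_Ioo, lintegral_indicator measurableSet_Ioo,
      lintegral_indicator measurableSet_Ico, lintegral_indicator measurableSet_Ico,
      setLIntegral_one, setLIntegral_one, setLIntegral_one, setLIntegral_one]
    rw [mu_Ioo_lo _ _ (by norm_num) (by norm_num),
      mu_Ioo_lo _ _ (by norm_num) (by norm_num),
      mu_Ioo_hi _ _ (by norm_num) (by norm_num),
      mu_Ioo_hi _ _ (by norm_num) (by norm_num)]
    congr 2
    rw [← ENNReal.ofReal_add (by norm_num) (by norm_num),
      ← ENNReal.ofReal_add (by norm_num) (by norm_num),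
      ← ENNReal.ofReal_add (by norm_num) (by norm_num)]
    norm_num
  have hA2 : μ (Ioo (9/10:ℝ) (19/20)) = ENNReal.ofReal (13/248) := by
    rw [hμdef, mu_Ioo_hi _ _ (by norm_num) (by norm_num)]; norm_num
  -- the contradiction
  have hfin : ENNReal.ofReal (13/248) ≤ ENNReal.ofReal (23/496) := by
    calc ENNReal.ofReal (13/248) = μ (Ioo (9/10:ℝ) (19/20)) := hA2.symm
      _ ≤ ENNReal.ofReal (5/124) + Xt + Xr := hle2
      _ = ENNReal.ofReal (5/124) + Xt := by rw [hXr, add_zero]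
      _ ≤ ENNReal.ofReal (5/124) + ENNReal.ofReal (3/496) := by
          exact add_le_add le_rfl hXt_le
      _ = ENNReal.ofReal (23/496) := by
          rw [← ENNReal.ofReal_add (by norm_num) (by norm_num)]; norm_num
  have := (ENNReal.ofReal_le_ofReal_iff (by norm_num)).mp hfin
  norm_num at this
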